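/- Let Σ be a symplectic vector space of dimension 2n and let Λ0, Δ be Lagrangian subspaces with Λ0 ∩ Δ = {0}, so that Σ = Λ0 ⊕ Δ. Call a linear map T : Λ0 → Δ symmetric if σ(T x, y) = σ(T y, x) for all x, y ∈ Λ0; then the graph gr T = {x + T x : x ∈ Λ0} is a Lagrangian subspace of Σ. For every countable set S of Lagrangian subspaces of Σ, the set of symmetric linear maps T : Λ0 → Δ such that gr T ∩ Λ = {0} for every Λ ∈ S is dense in the finite-dimensional space of symmetric linear maps from Λ0 to Δ (with its standard topology). In particular, there exists a Lagrangian subspace of Σ that intersects every element of S trivially. -/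

import Mathlib

set_option synthInstance.maxHeartbeats 1000000
set_option maxHeartbeats 1000000
set_option linter.unusedSectionVars false
set_option linter.unusedVariables false
set_option linter.unnecessarySimpa false


open Module Submodule Filter Topology

/-- The skew-orthogonal complement (with respect to a bilinear form `σ`)
of a subspace `Γ`: all vectors `x` with `σ x y = 0` for all `y ∈ Γ`. -/
def skewCompl {E : Type*} [AddCommGroup E] [Module ℝ E]
    (σ : E →ₗ[ℝ] E →ₗ[ℝ] ℝ) (Γ : Submodule ℝ E) : Submodule ℝ E where
  carrier := {x | ∀ y ∈ Γ, σ x y = 0}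
  zero_mem' := by intro y hy; simp
  add_mem' := by
    intro a b ha hb y hy
    have h1 := ha y hy
    have h2 := hb y hy
    simp only [map_add, LinearMap.add_apply]
    rw [h1, h2, add_zero]
  smul_mem' := by
    intro c a ha y hy
    have h1 := ha y hy
    simp only [map_smul, LinearMap.smul_apply, smul_eq_mul]
    rw [h1, mul_zero]

/-- A subspace is Lagrangian if it coincides with its skew-orthogonal complement. -/
def IsLagrangian {E : Type*} [AddCommGroup E] [Module ℝ E]
    (σ : E →ₗ[ℝ] E →ₗ[ℝ] ℝ) (Λ : Submodule ℝ E) : Prop :=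
  Λ = skewCompl σ Λ

section Aux
variable {E : Type*} [AddCommGroup E] [Module ℝ E]
  {σ : E →ₗ[ℝ] E →ₗ[ℝ] ℝ}

lemma mem_skewCompl {Γ : Submodule ℝ E} {x : E} :
    x ∈ skewCompl σ Γ ↔ ∀ y ∈ Γ, σ x y = 0 := Iff.rfl

lemma skew_of_alt (halt : ∀ x : E, σ x x = 0) (x y : E) : σ x y = -σ y x := by
  have h := halt (x + y)
  simp only [map_add, LinearMap.add_apply] at h
  rw [halt x, halt y] at h
  linarith

lemma skewCompl_eq_orthogonal (halt : ∀ x : E, σ x x = 0) (Γ : Submodule ℝ E) :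
    skewCompl σ Γ = LinearMap.BilinForm.orthogonal σ Γ := by
  ext x
  constructor
  · intro h y hy
    exact (LinearMap.IsAlt.isRefl halt) x y (h y hy)
  · intro h y hy
    exact (LinearMap.IsAlt.isRefl halt) y x (h y hy)

lemma isotropic_of_lagrangian {Λ : Submodule ℝ E} (hΛ : IsLagrangian σ Λ)
    {a b : E} (ha : a ∈ Λ) (hb : b ∈ Λ) : σ a b = 0 := by
  rw [hΛ] at ha; exact ha b hb

end Aux

section Aux2
variable {E : Type*} [AddCommGroup E] [Module ℝ E] [FiniteDimensional ℝ E]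
  {σ : E →ₗ[ℝ] E →ₗ[ℝ] ℝ}

lemma finrank_skewCompl (halt : ∀ x : E, σ x x = 0)
    (hnondeg : ∀ x : E, (∀ y : E, σ x y = 0) → x = 0) (Γ : Submodule ℝ E) :
    finrank ℝ (skewCompl σ Γ) = finrank ℝ E - finrank ℝ Γ := by
  rw [skewCompl_eq_orthogonal halt]
  exact LinearMap.BilinForm.finrank_orthogonal
    ((LinearMap.IsRefl.nondegenerate_iff_separatingLeft (LinearMap.IsAlt.isRefl halt)).2 hnondeg) Γ

lemma lagrangian_finrank {n : ℕ} (halt : ∀ x : E, σ x x = 0)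
    (hnondeg : ∀ x : E, (∀ y : E, σ x y = 0) → x = 0)
    (hdim : finrank ℝ E = 2 * n) {Λ : Submodule ℝ E} (hΛ : IsLagrangian σ Λ) :
    finrank ℝ Λ = n := by
  have h := finrank_skewCompl halt hnondeg Λ
  rw [← hΛ, hdim] at h
  have : finrank ℝ Λ ≤ 2 * n := hdim ▸ Submodule.finrank_le Λ
  omega

end Aux2

section Graph
variable {E : Type*} [AddCommGroup E] [Module ℝ E]
  {σ : E →ₗ[ℝ] E →ₗ[ℝ] ℝ} {Λ0 Δ : Submodule ℝ E}

lemma mem_graph_iff (T : ↥Λ0 →ₗ[ℝ] ↥Δ) (w : E) :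
    w ∈ LinearMap.range (Λ0.subtype + Δ.subtype ∘ₗ T) ↔
      ∃ x : ↥Λ0, (x : E) + (T x : E) = w := by
  simp [LinearMap.mem_range, LinearMap.add_apply]

lemma graph_inj (hdisj : Λ0 ⊓ Δ = ⊥) (T : ↥Λ0 →ₗ[ℝ] ↥Δ) :
    Function.Injective (Λ0.subtype + Δ.subtype ∘ₗ T) := by
  rw [← LinearMap.ker_eq_bot]
  rw [Submodule.eq_bot_iff]
  intro x hx
  simp only [LinearMap.mem_ker, LinearMap.add_apply, LinearMap.comp_apply,
    Submodule.subtype_apply] at hx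
  have hmem : (x : E) ∈ Λ0 ⊓ Δ := by
    constructor
    · exact x.2
    · have hx' : (x : E) = -(T x : E) := eq_neg_of_add_eq_zero_left hx
      rw [hx']; exact neg_mem (T x).2
  rw [hdisj] at hmem
  exact Subtype.ext hmem

end Graph

section Graph2
variable {E : Type*} [AddCommGroup E] [Module ℝ E] [FiniteDimensional ℝ E]
  {σ : E →ₗ[ℝ] E →ₗ[ℝ] ℝ} {Λ0 Δ : Submodule ℝ E}

lemma graph_finrank (hdisj : Λ0 ⊓ Δ = ⊥) (T : ↥Λ0 →ₗ[ℝ] ↥Δ) :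
    finrank ℝ (LinearMap.range (Λ0.subtype + Δ.subtype ∘ₗ T)) = finrank ℝ Λ0 :=
  LinearMap.finrank_range_of_inj (graph_inj hdisj T)

lemma graph_lagrangian {n : ℕ} (halt : ∀ x : E, σ x x = 0)
    (hnondeg : ∀ x : E, (∀ y : E, σ x y = 0) → x = 0)
    (hdim : finrank ℝ E = 2 * n)
    (hΛ0 : IsLagrangian σ Λ0) (hΔ : IsLagrangian σ Δ)
    (hdisj : Λ0 ⊓ Δ = ⊥) (T : ↥Λ0 →ₗ[ℝ] ↥Δ)
    (hT : ∀ x y : ↥Λ0, σ ↑(T x) ↑y = σ ↑(T y) ↑x) :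
    IsLagrangian σ (LinearMap.range (Λ0.subtype + Δ.subtype ∘ₗ T)) := by
  set G := LinearMap.range (Λ0.subtype + Δ.subtype ∘ₗ T) with hG
  have hiso : ∀ a ∈ G, ∀ b ∈ G, σ a b = 0 := by
    intro a ha b hb
    obtain ⟨x, rfl⟩ := (mem_graph_iff T a).1 ha
    obtain ⟨y, rfl⟩ := (mem_graph_iff T b).1 hb
    have h1 : σ (x : E) (y : E) = 0 := isotropic_of_lagrangian hΛ0 x.2 y.2
    have h2 : σ ((T x : E)) ((T y : E)) = 0 := isotropic_of_lagrangian hΔ (T x).2 (T y).2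
    have h3 : σ (x : E) ((T y : E)) = -σ ((T x : E)) (y : E) := by
      rw [skew_of_alt halt, hT]
    simp only [map_add, LinearMap.add_apply]
    rw [h1, h2, h3]; ring
  have hle : G ≤ skewCompl σ G := by
    intro a ha
    exact fun b hb => hiso a ha b hb
  have h1 : finrank ℝ G = n := by
    rw [graph_finrank hdisj T, lagrangian_finrank halt hnondeg hdim hΛ0]
  have h2 : finrank ℝ (skewCompl σ G) = n := by
    rw [finrank_skewCompl halt hnondeg, h1, hdim]; omega
  show G = skewCompl σ G
  exact Submodule.eq_of_le_of_finrank_le hle (le_of_eq (h2.trans h1.symm))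

end Graph2

section JP
variable {E : Type*} [AddCommGroup E] [Module ℝ E] [FiniteDimensional ℝ E]
  {σ : E →ₗ[ℝ] E →ₗ[ℝ] ℝ} {Λ0 Δ : Submodule ℝ E}

lemma exists_JP
    (hnondeg : ∀ x : E, (∀ y : E, σ x y = 0) → x = 0)
    (hΔ : IsLagrangian σ Δ)
    (hrank : finrank ℝ ↥Δ = finrank ℝ ↥Λ0)
    (hsup : Λ0 ⊔ Δ = ⊤) :
    ∃ (J : ↥Λ0 →ₗ[ℝ] ↥Δ) (P : ↥Λ0 →ₗ[ℝ] ↥Λ0 →ₗ[ℝ] ℝ),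
      (∀ x y : ↥Λ0, σ ↑(J x) ↑y = P x y) ∧ (∀ x y : ↥Λ0, P x y = P y x) ∧
      ∀ x : ↥Λ0, x ≠ 0 → P x x ≠ 0 := by
  classical
  set b := finBasis ℝ ↥Λ0 with hb
  set P : ↥Λ0 →ₗ[ℝ] ↥Λ0 →ₗ[ℝ] ℝ :=
    ∑ i, LinearMap.smulRight (b.coord i) (b.coord i) with hP
  have hPval : ∀ x y : ↥Λ0, P x y = ∑ i, b.coord i x * b.coord i y := by
    intro x y
    simp [hP, LinearMap.sum_apply, LinearMap.smulRight_apply, smul_eq_mul]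
  have hPsymm : ∀ x y : ↥Λ0, P x y = P y x := by
    intro x y; rw [hPval, hPval]; exact Finset.sum_congr rfl fun i _ => mul_comm _ _
  have hPpos : ∀ x : ↥Λ0, x ≠ 0 → P x x ≠ 0 := by
    intro x hx h0
    apply hx
    rw [hPval] at h0
    have hz : ∀ i ∈ Finset.univ, b.coord i x * b.coord i x = 0 := by
      intro i _
      have := (Finset.sum_eq_zero_iff_of_nonneg (fun i _ => mul_self_nonneg (b.coord i x))).1 h0
      exact this i (Finset.mem_univ i)
    have : ∀ i, b.coord i x = 0 := fun i =>
      mul_self_eq_zero.mp (hz i (Finset.mem_univ i))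
    exact b.forall_coord_eq_zero_iff.mp this
  set Lmap : ↥Δ →ₗ[ℝ] (↥Λ0 →ₗ[ℝ] ℝ) :=
    { toFun := fun d => (σ d).comp Λ0.subtype
      map_add' := by intro a c; ext y; simp
      map_smul' := by intro c a; ext y; simp } with hL
  have hinj : Function.Injective Lmap := by
    rw [← LinearMap.ker_eq_bot, Submodule.eq_bot_iff]
    intro d hd
    simp only [LinearMap.mem_ker] at hd
    apply Subtype.ext
    apply hnondeg
    intro y
    have hy : y ∈ Λ0 ⊔ Δ := by rw [hsup]; trivial
    obtain ⟨a, ha, c, hc, rfl⟩ := Submodule.mem_sup.1 hy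
    have h1 : σ (d : E) a = 0 := by
      have := DFunLike.congr_fun hd ⟨a, ha⟩
      simpa [hL] using this
    have h2 : σ (d : E) c = 0 := isotropic_of_lagrangian hΔ d.2 hc
    rw [map_add, h1, h2, add_zero]
  have hsurj : Function.Surjective Lmap := by
    have : finrank ℝ ↥Δ = finrank ℝ (↥Λ0 →ₗ[ℝ] ℝ) := by
      rw [hrank]
      exact (Subspace.dual_finrank_eq).symm
    exact (LinearMap.injective_iff_surjective_of_finrank_eq_finrank this).1 hinj
  set Leq := LinearEquiv.ofBijective Lmap ⟨hinj, hsurj⟩ with hLeq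
  refine ⟨Leq.symm.toLinearMap ∘ₗ P, P, ?_, hPsymm, hPpos⟩
  intro x y
  have : Lmap (Leq.symm (P x)) = P x := by
    exact Leq.apply_symm_apply (P x)
  have h2 : Lmap (Leq.symm (P x)) y = P x y := by rw [this]
  simpa [hL] using h2
end JP

section BadFinite
variable {E : Type*} [AddCommGroup E] [Module ℝ E] [FiniteDimensional ℝ E]
  {σ : E →ₗ[ℝ] E →ₗ[ℝ] ℝ} {Λ0 Δ : Submodule ℝ E}

lemma bad_finite (halt : ∀ x : E, σ x x = 0)
    (hΛ0 : IsLagrangian σ Λ0) (hΔ : IsLagrangian σ Δ)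
    (J : ↥Λ0 →ₗ[ℝ] ↥Δ) (P : ↥Λ0 →ₗ[ℝ] ↥Λ0 →ₗ[ℝ] ℝ)
    (hJP : ∀ x y : ↥Λ0, σ ↑(J x) ↑y = P x y)
    (hPsymm : ∀ x y : ↥Λ0, P x y = P y x)
    (hPpos : ∀ x : ↥Λ0, x ≠ 0 → P x x ≠ 0)
    (T : ↥Λ0 →ₗ[ℝ] ↥Δ) (hT : ∀ x y : ↥Λ0, σ ↑(T x) ↑y = σ ↑(T y) ↑x)
    (Λ : Submodule ℝ E) (hΛ : IsLagrangian σ Λ) :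
    {t : ℝ | LinearMap.range (Λ0.subtype + Δ.subtype ∘ₗ (T + t • J)) ⊓ Λ ≠ ⊥}.Finite := by
  classical
  set Bad := {t : ℝ | LinearMap.range (Λ0.subtype + Δ.subtype ∘ₗ (T + t • J)) ⊓ Λ ≠ ⊥}
    with hBad
  rw [← Set.finite_coe_iff]
  have hch : ∀ t : ↥Bad, ∃ x : ↥Λ0, x ≠ 0 ∧
      ((x : E) + ((T x : E) + t.1 • (J x : E))) ∈ Λ := by
    rintro ⟨t, ht⟩
    obtain ⟨w, hw, hw0⟩ := Submodule.ne_bot_iff _ |>.1 ht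
    obtain ⟨hwr, hwΛ⟩ := Submodule.mem_inf.1 hw
    obtain ⟨x, hx⟩ := (mem_graph_iff (T + t • J) w).1 hwr
    have hxe : (x : E) + ((T x : E) + t • (J x : E)) = w := by
      simpa [LinearMap.add_apply, LinearMap.smul_apply] using hx
    refine ⟨x, ?_, hxe ▸ hwΛ⟩
    rintro rfl
    apply hw0
    rw [← hxe]; simp
  choose x hx0 hxΛ using hch
  have key : ∀ t s : ↥Bad, t ≠ s → P (x t) (x s) = 0 := by
    intro t s hts
    have h0 : σ ((x t : E) + ((T (x t) : E) + t.1 • (J (x t) : E)))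
        ((x s : E) + ((T (x s) : E) + s.1 • (J (x s) : E))) = 0 :=
      isotropic_of_lagrangian hΛ (hxΛ t) (hxΛ s)
    have e1 : σ (x t : E) (x s : E) = 0 :=
      isotropic_of_lagrangian hΛ0 (x t).2 (x s).2
    have e2 : σ (T (x t) : E) (T (x s) : E) = 0 :=
      isotropic_of_lagrangian hΔ (T (x t)).2 (T (x s)).2
    have e3 : σ (J (x t) : E) (J (x s) : E) = 0 :=
      isotropic_of_lagrangian hΔ (J (x t)).2 (J (x s)).2
    have e4 : σ (J (x t) : E) (T (x s) : E) = 0 :=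
      isotropic_of_lagrangian hΔ (J (x t)).2 (T (x s)).2
    have e5 : σ (T (x t) : E) (J (x s) : E) = 0 :=
      isotropic_of_lagrangian hΔ (T (x t)).2 (J (x s)).2
    have e6 : σ (x t : E) (T (x s) : E) = -σ (T (x t) : E) (x s : E) := by
      rw [skew_of_alt halt, hT]
    have e7 : σ (x t : E) (J (x s) : E) = -P (x t) (x s) := by
      rw [skew_of_alt halt, hJP, hPsymm]
    have e8 : σ (J (x t) : E) (x s : E) = P (x t) (x s) := hJP _ _
    simp only [map_add, LinearMap.add_apply, map_smul, LinearMap.smul_apply,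
      smul_eq_mul] at h0
    rw [e1, e2, e3, e4, e5, e6, e7, e8] at h0
    have hts' : t.1 - s.1 ≠ 0 := sub_ne_zero.2 fun h => hts (Subtype.ext h)
    have hmul : (t.1 - s.1) * P (x t) (x s) = 0 := by linear_combination h0
    exact (mul_eq_zero.1 hmul).resolve_left hts'
  have hli : LinearIndependent ℝ x := by
    apply LinearMap.BilinForm.linearIndependent_of_iIsOrtho
      (LinearMap.BilinForm.iIsOrtho_def.2 key)
    intro t
    exact hPpos _ (hx0 t)
  exact hli.finite
end BadFinite

section Closed
variable {E : Type*} [NormedAddCommGroup E] [NormedSpace ℝ E] [FiniteDimensional ℝ E]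
  {Λ0 Δ : Submodule ℝ E}

set_option synthInstance.maxHeartbeats 1000000 in
lemma bad_closed (hdisj : Λ0 ⊓ Δ = ⊥) (Λ : Submodule ℝ E) :
    IsClosed {T : ↥Λ0 →L[ℝ] ↥Δ |
      LinearMap.range (Λ0.subtype + Δ.subtype ∘ₗ (T : ↥Λ0 →ₗ[ℝ] ↥Δ)) ⊓ Λ ≠ ⊥} := by
  apply IsSeqClosed.isClosed
  intro f p hf hfp
  have hpick : ∀ k, ∃ x : ↥Λ0, ‖x‖ = 1 ∧ ((x : E) + ((f k) x : E)) ∈ Λ := by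
    intro k
    obtain ⟨w, hw, hw0⟩ := Submodule.ne_bot_iff _ |>.1 (hf k)
    obtain ⟨hwr, hwΛ⟩ := Submodule.mem_inf.1 hw
    obtain ⟨x, hx⟩ := (mem_graph_iff ((f k : ↥Λ0 →ₗ[ℝ] ↥Δ)) w).1 hwr
    have hxe : (x : E) + ((f k) x : E) = w := by simpa using hx
    have hx0 : x ≠ 0 := by
      rintro rfl
      apply hw0; rw [← hxe]; simp
    have hxn : ‖x‖ ≠ 0 := norm_ne_zero_iff.2 hx0
    refine ⟨‖x‖⁻¹ • x, ?_, ?_⟩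
    · rw [norm_smul]
      simp only [norm_inv, norm_norm]
      exact inv_mul_cancel₀ hxn
    · have : ((‖x‖⁻¹ • x : ↥Λ0) : E) + ((f k) (‖x‖⁻¹ • x) : E) = ‖x‖⁻¹ • w := by
        rw [← hxe, map_smul]
        simp [smul_add]
      rw [this]
      exact Λ.smul_mem _ hwΛ
  choose x hx1 hxΛ using hpick
  have hmem : ∀ k, x k ∈ Metric.sphere (0 : ↥Λ0) 1 := by
    intro k; rw [mem_sphere_zero_iff_norm]; exact hx1 k
  obtain ⟨z, hz, φ, hφmono, hφtend⟩ :=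
    (isCompact_sphere (0 : ↥Λ0) 1).tendsto_subseq hmem
  have heval : Tendsto (fun j => (f (φ j)) (x (φ j))) atTop (𝓝 (p z)) := by
    have h1 : Tendsto (fun j => ((f (φ j)), x (φ j))) atTop (𝓝 (p, z)) :=
      (hfp.comp hφmono.tendsto_atTop).prodMk_nhds hφtend
    exact ((isBoundedBilinearMap_apply.continuous).tendsto (p, z)).comp h1
  have hlim : Tendsto (fun j => ((x (φ j) : E) + ((f (φ j)) (x (φ j)) : E)))
      atTop (𝓝 ((z : E) + (p z : E))) :=
    ((continuous_subtype_val.tendsto z).comp hφtend).add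
      ((continuous_subtype_val.tendsto (p z)).comp heval)
  have hzΛ : ((z : E) + (p z : E)) ∈ Λ := by
    have hcl : IsClosed (Λ : Set E) := Submodule.closed_of_finiteDimensional Λ
    exact hcl.mem_of_tendsto hlim (Filter.Eventually.of_forall fun j => hxΛ (φ j))
  have hz0 : z ≠ 0 := by
    intro h
    rw [h] at hz
    simp at hz
  have hne : ((z : E) + (p z : E)) ≠ 0 := by
    intro h
    apply hz0
    have hz' : (z : E) = -((p z : E)) := eq_neg_of_add_eq_zero_left h
    have : (z : E) ∈ Λ0 ⊓ Δ := ⟨z.2, by rw [hz']; exact neg_mem (p z).2⟩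
    rw [hdisj] at this
    exact Subtype.ext this
  apply Submodule.ne_bot_iff _ |>.2
  refine ⟨(z : E) + (p z : E), Submodule.mem_inf.2 ⟨?_, hzΛ⟩, hne⟩
  exact (mem_graph_iff ((p : ↥Λ0 →ₗ[ℝ] ↥Δ)) _).2 ⟨z, by simp⟩
end Closed

lemma dense_avoid_countable {W : Type*} [NormedAddCommGroup W] [NormedSpace ℝ W]
    [CompleteSpace W] {p : W → Prop} (hc : IsClosed {x | p x})
    {α : Type*} (S : Set α) (hS : S.Countable) (f : α → Set W)
    (hcl : ∀ a ∈ S, IsClosed (f a))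
    (hap : ∀ a ∈ S, ∀ x : W, p x → ∀ r : ℝ, 0 < r →
      ∃ y : W, p y ∧ ‖y - x‖ < r ∧ y ∉ f a) :
    Dense {x : {x : W // p x} | ∀ a ∈ S, x.1 ∉ f a} := by
  haveI : CompleteSpace {x : W // p x} := hc.completeSpace_coe
  haveI : BaireSpace {x : W // p x} := BaireSpace.of_completelyPseudoMetrizable
  have heq : {x : {x : W // p x} | ∀ a ∈ S, x.1 ∉ f a}
      = ⋂ a ∈ S, {x : {x : W // p x} | x.1 ∉ f a} := by ext; simp
  rw [heq]
  refine dense_biInter_of_isOpen ?_ hS ?_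
  · intro a ha
    have h2 : {x : {x : W // p x} | x.1 ∉ f a} = Subtype.val ⁻¹' (f a)ᶜ := rfl
    rw [h2]
    exact ((hcl a ha).isOpen_compl).preimage continuous_subtype_val
  · intro a ha
    rw [Metric.dense_iff]
    rintro ⟨x, hx⟩ r hr
    obtain ⟨y, hy, hyd, hyf⟩ := hap a ha x hx r hr
    exact ⟨⟨y, hy⟩, by rwa [Metric.mem_ball, Subtype.dist_eq, dist_eq_norm], hyf⟩


/- STATEMENT 16 -/
theorem stmt_16 {E : Type*} [NormedAddCommGroup E] [NormedSpace ℝ E]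
    [FiniteDimensional ℝ E] {n : ℕ}
    (σ : E →ₗ[ℝ] E →ₗ[ℝ] ℝ)
    (halt : ∀ x : E, σ x x = 0)
    (hnondeg : ∀ x : E, (∀ y : E, σ x y = 0) → x = 0)
    (hdim : Module.finrank ℝ E = 2 * n)
    (Λ0 Δ : Submodule ℝ E)
    (hΛ0 : IsLagrangian σ Λ0) (hΔ : IsLagrangian σ Δ)
    (hdisj : Λ0 ⊓ Δ = ⊥)
    (S : Set (Submodule ℝ E)) (hS : S.Countable)
    (hSL : ∀ Λ ∈ S, IsLagrangian σ Λ) :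
    (∀ T : ↥Λ0 →L[ℝ] ↥Δ, (∀ x y : ↥Λ0, σ ↑(T x) ↑y = σ ↑(T y) ↑x) →
      IsLagrangian σ
        (LinearMap.range (Λ0.subtype + Δ.subtype ∘ₗ (T : ↥Λ0 →ₗ[ℝ] ↥Δ)))) ∧
    Dense {T : {T : ↥Λ0 →L[ℝ] ↥Δ // ∀ x y : ↥Λ0, σ ↑(T x) ↑y = σ ↑(T y) ↑x} |
      ∀ Λ ∈ S,
        LinearMap.range (Λ0.subtype + Δ.subtype ∘ₗ (T.1 : ↥Λ0 →ₗ[ℝ] ↥Δ)) ⊓ Λ = ⊥} ∧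
    ∃ Λ' : Submodule ℝ E, IsLagrangian σ Λ' ∧ ∀ Λ ∈ S, Λ' ⊓ Λ = ⊥ := by
  classical
  have part1 : ∀ T : ↥Λ0 →L[ℝ] ↥Δ, (∀ x y : ↥Λ0, σ ↑(T x) ↑y = σ ↑(T y) ↑x) →
      IsLagrangian σ
        (LinearMap.range (Λ0.subtype + Δ.subtype ∘ₗ (T : ↥Λ0 →ₗ[ℝ] ↥Δ))) :=
    fun T hT => graph_lagrangian halt hnondeg hdim hΛ0 hΔ hdisj _ hT
  have hrk0 : finrank ℝ Λ0 = n := lagrangian_finrank halt hnondeg hdim hΛ0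
  have hrkΔ : finrank ℝ Δ = n := lagrangian_finrank halt hnondeg hdim hΔ
  have hsup : Λ0 ⊔ Δ = ⊤ := by
    apply Submodule.eq_top_of_finrank_eq
    have h := Submodule.finrank_sup_add_finrank_inf_eq Λ0 Δ
    rw [hdisj, finrank_bot, add_zero, hrk0, hrkΔ] at h
    rw [h, hdim]; omega
  obtain ⟨J, P, hJP, hPsymm, hPpos⟩ :=
    exists_JP hnondeg hΔ (by rw [hrkΔ, hrk0]) hsup
  -- the symmetric maps form a closed subset
  have hVc : IsClosed {T : ↥Λ0 →L[ℝ] ↥Δ | ∀ x y : ↥Λ0, σ ↑(T x) ↑y = σ ↑(T y) ↑x} := by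
    have heq : {T : ↥Λ0 →L[ℝ] ↥Δ | ∀ x y : ↥Λ0, σ ↑(T x) ↑y = σ ↑(T y) ↑x} =
        ⋂ (x : ↥Λ0), ⋂ (y : ↥Λ0),
          {T : ↥Λ0 →L[ℝ] ↥Δ | σ ↑(T x) ↑y = σ ↑(T y) ↑x} := by
      ext T; simp [Set.mem_iInter]
    rw [heq]
    have hc : ∀ x y : ↥Λ0, Continuous fun T : ↥Λ0 →L[ℝ] ↥Δ => σ ↑(T x) ↑y := by
      intro x y
      have h1 : Continuous fun T : ↥Λ0 →L[ℝ] ↥Δ => T x := continuous_eval_const x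
      have h2 : Continuous fun w : E => σ w (↑y : E) :=
        (σ.flip (↑y : E)).continuous_of_finiteDimensional
      exact h2.comp (continuous_subtype_val.comp h1)
    exact isClosed_iInter fun x => isClosed_iInter fun y => isClosed_eq (hc x y) (hc y x)
  set Jc : ↥Λ0 →L[ℝ] ↥Δ := LinearMap.toContinuousLinearMap J with hJc
  have happrox : ∀ Λ ∈ S, ∀ Tc : ↥Λ0 →L[ℝ] ↥Δ,
      (∀ x y : ↥Λ0, σ ↑(Tc x) ↑y = σ ↑(Tc y) ↑x) → ∀ r : ℝ, 0 < r →
      ∃ q : ↥Λ0 →L[ℝ] ↥Δ, (∀ x y : ↥Λ0, σ ↑(q x) ↑y = σ ↑(q y) ↑x) ∧ ‖q - Tc‖ < r ∧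
        q ∉ {T : ↥Λ0 →L[ℝ] ↥Δ |
          LinearMap.range (Λ0.subtype + Δ.subtype ∘ₗ (T : ↥Λ0 →ₗ[ℝ] ↥Δ)) ⊓ Λ ≠ ⊥} := by
    intro Λ hΛS Tc hTc r hr
    have hΛ := hSL Λ hΛS
    have hBadfin := bad_finite halt hΛ0 hΔ J P hJP hPsymm hPpos
      (Tc : ↥Λ0 →ₗ[ℝ] ↥Δ) hTc Λ hΛ
    have hδ : 0 < r / (‖Jc‖ + 1) := by positivity
    obtain ⟨t, htIoo, htBad⟩ := ((Set.Ioo_infinite hδ).diff hBadfin).nonempty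
    have htpos : 0 < t := htIoo.1
    have hval : ∀ x y : ↥Λ0,
        σ ↑((Tc + t • Jc) x) ↑y = σ ↑(Tc x) ↑y + t * P x y := by
      intro x y
      have hcoe : ((Tc + t • Jc) x : E) = (Tc x : E) + t • (J x : E) := by
        simp [hJc]
      rw [hcoe, map_add, LinearMap.add_apply, map_smul, LinearMap.smul_apply,
        smul_eq_mul, hJP]
    refine ⟨Tc + t • Jc, ?_, ?_, ?_⟩
    · intro x y
      rw [hval, hval, hTc x y, hPsymm x y]
    · simp only [add_sub_cancel_left]
      have hb : ‖t • Jc‖ ≤ t * ‖Jc‖ := by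
        have h0 := ContinuousLinearMap.opNorm_smul_le t Jc
        rwa [Real.norm_eq_abs, abs_of_pos htpos] at h0
      have h2 : t * ‖Jc‖ < r := by
        have h3 : t * (‖Jc‖ + 1) < (r / (‖Jc‖ + 1)) * (‖Jc‖ + 1) := by
          apply mul_lt_mul_of_pos_right htIoo.2
          positivity
        have h4 : (r / (‖Jc‖ + 1)) * (‖Jc‖ + 1) = r := by field_simp
        nlinarith [norm_nonneg Jc]
      linarith
    · have hcoe2 : ((Tc + t • Jc : ↥Λ0 →L[ℝ] ↥Δ) : ↥Λ0 →ₗ[ℝ] ↥Δ) =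
          (Tc : ↥Λ0 →ₗ[ℝ] ↥Δ) + t • J := by
        ext x; simp [hJc]
      intro hmem
      apply htBad
      simp only [Set.mem_setOf_eq, hcoe2] at hmem
      exact hmem
  have hgoal2' := dense_avoid_countable hVc S hS
    (fun Λ => {T : ↥Λ0 →L[ℝ] ↥Δ |
      LinearMap.range (Λ0.subtype + Δ.subtype ∘ₗ (T : ↥Λ0 →ₗ[ℝ] ↥Δ)) ⊓ Λ ≠ ⊥})
    (fun Λ _ => bad_closed hdisj Λ) happrox
  have hsets : {T : {T : ↥Λ0 →L[ℝ] ↥Δ // ∀ x y : ↥Λ0, σ ↑(T x) ↑y = σ ↑(T y) ↑x} |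
      ∀ Λ ∈ S,
        LinearMap.range (Λ0.subtype + Δ.subtype ∘ₗ (T.1 : ↥Λ0 →ₗ[ℝ] ↥Δ)) ⊓ Λ = ⊥} =
      {x : {T : ↥Λ0 →L[ℝ] ↥Δ // ∀ x y : ↥Λ0, σ ↑(T x) ↑y = σ ↑(T y) ↑x} |
        ∀ Λ ∈ S, x.1 ∉ {T : ↥Λ0 →L[ℝ] ↥Δ |
          LinearMap.range (Λ0.subtype + Δ.subtype ∘ₗ (T : ↥Λ0 →ₗ[ℝ] ↥Δ)) ⊓ Λ ≠ ⊥}} := by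
    ext q
    simp only [Set.mem_setOf_eq, not_not]
  have hgoal2 : Dense {T : {T : ↥Λ0 →L[ℝ] ↥Δ //
      ∀ x y : ↥Λ0, σ ↑(T x) ↑y = σ ↑(T y) ↑x} |
      ∀ Λ ∈ S,
        LinearMap.range (Λ0.subtype + Δ.subtype ∘ₗ (T.1 : ↥Λ0 →ₗ[ℝ] ↥Δ)) ⊓ Λ = ⊥} := by
    rw [hsets]; exact hgoal2'
  refine ⟨part1, hgoal2, ?_⟩
  haveI : Nonempty {T : ↥Λ0 →L[ℝ] ↥Δ // ∀ x y : ↥Λ0, σ ↑(T x) ↑y = σ ↑(T y) ↑x} :=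
    ⟨⟨0, by intro x y; simp⟩⟩
  obtain ⟨T, hT⟩ := hgoal2.nonempty
  exact ⟨LinearMap.range (Λ0.subtype + Δ.subtype ∘ₗ (T.1 : ↥Λ0 →ₗ[ℝ] ↥Δ)),
    part1 T.1 T.2, hT⟩
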